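/- For the map x(u,v) = (sinh(u−v)·sech(u+v), cosh(u−v)·sech(u+v), tanh(u+v)) into R³₁, one has ⟨x_u,x_u⟩ = 0, ⟨x_v,x_v⟩ = 0, and ⟨x_u,x_v⟩ = 2·sech²(u+v). -/

import Mathlib

/-- Indefinite inner product of signature (-,+,+) on ℝ³₁ = ℝ × ℝ × ℝ. -/
noncomputable def ip (a b : ℝ × ℝ × ℝ) : ℝ :=
  -(a.1 * b.1) + a.2.1 * b.2.1 + a.2.2 * b.2.2

noncomputable def pderivU (f : ℝ → ℝ → ℝ) (u v : ℝ) : ℝ := deriv (fun t => f t v) u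
noncomputable def pderivV (f : ℝ → ℝ → ℝ) (u v : ℝ) : ℝ := deriv (fun t => f u t) v

/-- sech t = 1 / cosh t. -/
noncomputable def sech (t : ℝ) : ℝ := 1 / Real.cosh t

/-- The Lorentz-sphere map. -/
noncomputable def xS (u v : ℝ) : ℝ × ℝ × ℝ :=
  (Real.sinh (u - v) * sech (u + v), Real.cosh (u - v) * sech (u + v), Real.tanh (u + v))

noncomputable def xS_u (u v : ℝ) : ℝ × ℝ × ℝ :=
  (pderivU (fun a b => (xS a b).1) u v,
   pderivU (fun a b => (xS a b).2.1) u v,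
   pderivU (fun a b => (xS a b).2.2) u v)

noncomputable def xS_v (u v : ℝ) : ℝ × ℝ × ℝ :=
  (pderivV (fun a b => (xS a b).1) u v,
   pderivV (fun a b => (xS a b).2.1) u v,
   pderivV (fun a b => (xS a b).2.2) u v)

theorem stmt3 (u v : ℝ) :
    ip (xS_u u v) (xS_u u v) = 0 ∧
    ip (xS_v u v) (xS_v u v) = 0 ∧
    ip (xS_u u v) (xS_v u v) = 2 * (sech (u + v))^2 := by
  have hc : Real.cosh (u + v) ≠ 0 := (Real.cosh_pos (u + v)).ne'
  have hu1 : HasDerivAt (fun t : ℝ => t - v) 1 u := (hasDerivAt_id u).sub_const v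
  have hu2 : HasDerivAt (fun t : ℝ => t + v) 1 u := (hasDerivAt_id u).add_const v
  have hv1 : HasDerivAt (fun t : ℝ => u - t) (-1) v := by
    simpa using (hasDerivAt_id v).const_sub u
  have hv2 : HasDerivAt (fun t : ℝ => u + t) 1 v := by
    simpa using (hasDerivAt_id v).const_add u
  have d1 : HasDerivAt (fun t => Real.sinh (t - v) / Real.cosh (t + v))
      ((Real.cosh (u - v) * Real.cosh (u + v)
        - Real.sinh (u - v) * Real.sinh (u + v)) / (Real.cosh (u + v))^2) u := by
    simpa [Pi.div_def] using (hu1.sinh.div hu2.cosh hc)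
  have d2 : HasDerivAt (fun t => Real.cosh (t - v) / Real.cosh (t + v))
      ((Real.sinh (u - v) * Real.cosh (u + v)
        - Real.cosh (u - v) * Real.sinh (u + v)) / (Real.cosh (u + v))^2) u := by
    simpa [Pi.div_def] using (hu1.cosh.div hu2.cosh hc)
  have d3 : HasDerivAt (fun t => Real.sinh (t + v) / Real.cosh (t + v))
      ((Real.cosh (u + v) * Real.cosh (u + v)
        - Real.sinh (u + v) * Real.sinh (u + v)) / (Real.cosh (u + v))^2) u := by
    simpa [Pi.div_def] using (hu2.sinh.div hu2.cosh hc)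
  have e1 : HasDerivAt (fun t => Real.sinh (u - t) / Real.cosh (u + t))
      ((Real.cosh (u - v) * (-1) * Real.cosh (u + v)
        - Real.sinh (u - v) * Real.sinh (u + v)) / (Real.cosh (u + v))^2) v := by
    simpa [Pi.div_def, mul_comm, mul_assoc, mul_left_comm] using (hv1.sinh.div hv2.cosh hc)
  have e2 : HasDerivAt (fun t => Real.cosh (u - t) / Real.cosh (u + t))
      ((Real.sinh (u - v) * (-1) * Real.cosh (u + v)
        - Real.cosh (u - v) * Real.sinh (u + v)) / (Real.cosh (u + v))^2) v := by
    simpa [Pi.div_def, mul_comm, mul_assoc, mul_left_comm] using (hv1.cosh.div hv2.cosh hc)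
  have e3 : HasDerivAt (fun t => Real.sinh (u + t) / Real.cosh (u + t))
      ((Real.cosh (u + v) * Real.cosh (u + v)
        - Real.sinh (u + v) * Real.sinh (u + v)) / (Real.cosh (u + v))^2) v := by
    simpa [Pi.div_def] using (hv2.sinh.div hv2.cosh hc)
  have fx1 : ∀ a b : ℝ, (xS a b).1 = Real.sinh (a - b) / Real.cosh (a + b) := by
    intro a b; simp [xS, sech, div_eq_mul_inv]
  have fx2 : ∀ a b : ℝ, (xS a b).2.1 = Real.cosh (a - b) / Real.cosh (a + b) := by
    intro a b; simp [xS, sech, div_eq_mul_inv]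
  have fx3 : ∀ a b : ℝ, (xS a b).2.2 = Real.sinh (a + b) / Real.cosh (a + b) := by
    intro a b; simp [xS, Real.tanh_eq_sinh_div_cosh]
  have hxu : xS_u u v =
      ((Real.cosh (u - v) * Real.cosh (u + v)
        - Real.sinh (u - v) * Real.sinh (u + v)) / (Real.cosh (u + v))^2,
       (Real.sinh (u - v) * Real.cosh (u + v)
        - Real.cosh (u - v) * Real.sinh (u + v)) / (Real.cosh (u + v))^2,
       (Real.cosh (u + v) * Real.cosh (u + v)
        - Real.sinh (u + v) * Real.sinh (u + v)) / (Real.cosh (u + v))^2) := by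
    simp only [xS_u, pderivU, fx1, fx2, fx3, d1.deriv, d2.deriv, d3.deriv]
  have hxv : xS_v u v =
      ((Real.cosh (u - v) * (-1) * Real.cosh (u + v)
        - Real.sinh (u - v) * Real.sinh (u + v)) / (Real.cosh (u + v))^2,
       (Real.sinh (u - v) * (-1) * Real.cosh (u + v)
        - Real.cosh (u - v) * Real.sinh (u + v)) / (Real.cosh (u + v))^2,
       (Real.cosh (u + v) * Real.cosh (u + v)
        - Real.sinh (u + v) * Real.sinh (u + v)) / (Real.cosh (u + v))^2) := by
    simp only [xS_v, pderivV, fx1, fx2, fx3, e1.deriv, e2.deriv, e3.deriv]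
  have h1 : Real.cosh (u - v) ^ 2 - Real.sinh (u - v) ^ 2 = 1 :=
    Real.cosh_sq_sub_sinh_sq (u - v)
  have h2 : Real.cosh (u + v) ^ 2 - Real.sinh (u + v) ^ 2 = 1 :=
    Real.cosh_sq_sub_sinh_sq (u + v)
  refine ⟨?_, ?_, ?_⟩
  · rw [hxu]; simp only [ip]; field_simp
    linear_combination ((Real.sinh (u+v)^2 - Real.cosh (u+v)^2)) * h1
      + ((Real.cosh (u+v)^2 - Real.sinh (u+v)^2)) * h2
  · rw [hxv]; simp only [ip]; field_simp
    linear_combination ((Real.sinh (u+v)^2 - Real.cosh (u+v)^2)) * h1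
      + ((Real.cosh (u+v)^2 - Real.sinh (u+v)^2)) * h2
  · rw [hxu, hxv]; simp only [ip, sech]; field_simp
    linear_combination ((Real.cosh (u+v)^2 + Real.sinh (u+v)^2)) * h1
      + ((Real.cosh (u+v)^2 - Real.sinh (u+v)^2)) * h2
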